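/- Let E = K⟨a,b,c,d⟩ be the exterior algebra on four generators over a field K, and let I = (a∧b + c∧d, a∧c, b∧c). Then d is a regular element on E/I, i.e., the annihilator of d in E/I equals d·(E/I), and the image of I in E/(d) ≅ K⟨a,b,c⟩ is the square m² of the maximal ideal m = (a,b,c). -/

import Mathlib

set_option maxHeartbeats 1000000
set_option synthInstance.maxHeartbeats 400000

namespace Stmt8Aux
open ExteriorAlgebra

variable (K : Type*) [Field K]

noncomputable def fam0 : ∀ i, (Fin 4 → K) [⋀^Fin i]→ₗ[K] K
  | 0 => AlternatingMap.constOfIsEmpty K (Fin 4 → K) (Fin 0) 1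
  | _+1 => 0

noncomputable def fam1 (j : Fin 4) : ∀ i, (Fin 4 → K) [⋀^Fin i]→ₗ[K] K
  | 1 => AlternatingMap.ofSubsingleton K (Fin 4 → K) K (0 : Fin 1) (LinearMap.proj j)
  | _ => 0

noncomputable def fam2 (p q : Fin 4) : ∀ i, (Fin 4 → K) [⋀^Fin i]→ₗ[K] K
  | 2 => (Matrix.detRowAlternating : (Fin 2 → K) [⋀^Fin 2]→ₗ[K] K).compLinearMap
      (LinearMap.funLeft K K ![p, q])
  | _ => 0

noncomputable def Φ0 : ExteriorAlgebra K (Fin 4 → K) →ₗ[K] K := liftAlternating (fam0 K)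
noncomputable def Φ1 (j : Fin 4) : ExteriorAlgebra K (Fin 4 → K) →ₗ[K] K :=
  liftAlternating (fam1 K j)
noncomputable def Φ2 (p q : Fin 4) : ExteriorAlgebra K (Fin 4 → K) →ₗ[K] K :=
  liftAlternating (fam2 K p q)

theorem Φ0_one : Φ0 K (1 : ExteriorAlgebra K (Fin 4 → K)) = 1 := by
  simp [Φ0, fam0]

theorem Φ0_ι_mul (m : Fin 4 → K) (x : ExteriorAlgebra K (Fin 4 → K)) :
    Φ0 K (ι K m * x) = 0 := by
  rw [Φ0, liftAlternating_ι_mul]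
  have h : (fun i => (fam0 K (i+1)).curryLeft m)
      = fun i => (0 : (Fin 4 → K) [⋀^Fin i]→ₗ[K] K) := by
    funext i
    show AlternatingMap.curryLeft 0 m = 0
    simp
  rw [h]
  have h2 : (fun i => (0 : (Fin 4 → K) [⋀^Fin i]→ₗ[K] K)) = 0 := rfl
  rw [h2, map_zero, LinearMap.zero_apply]

theorem Φ1_ι_mul (j : Fin 4) (m : Fin 4 → K) (x : ExteriorAlgebra K (Fin 4 → K)) :
    Φ1 K j (ι K m * x) = m j * Φ0 K x := by
  rw [Φ1, liftAlternating_ι_mul]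
  have h : (fun i => (fam1 K j (i+1)).curryLeft m) = m j • fam0 K := by
    funext i
    match i with
    | 0 => ext v; simp [fam1, fam0]
    | (n+1) => show AlternatingMap.curryLeft 0 m = _; simp [fam0]
  rw [h, map_smul, LinearMap.smul_apply, smul_eq_mul, Φ0]

theorem Φ2_ι_mul (p q : Fin 4) (m : Fin 4 → K) (x : ExteriorAlgebra K (Fin 4 → K)) :
    Φ2 K p q (ι K m * x) = m p * Φ1 K q x - m q * Φ1 K p x := by
  rw [Φ2, liftAlternating_ι_mul]
  have h : (fun i => (fam2 K p q (i+1)).curryLeft m) = m p • fam1 K q - m q • fam1 K p := by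
    funext i
    match i with
    | 0 => show AlternatingMap.curryLeft 0 m = _; ext v; simp [fam1]
    | 1 => ext v; simp [fam2, fam1, Matrix.det_fin_two, Matrix.vecHead]; change Matrix.det (Matrix.of _) = _; rw [Matrix.det_fin_two]; rfl
    | (n+2) => show AlternatingMap.curryLeft 0 m = _; ext v; simp [fam1]
  rw [h, map_sub, map_smul, map_smul]
  simp [Φ1]

theorem Φ1_ι (j : Fin 4) (v : Fin 4 → K) : Φ1 K j (ι K v) = v j := by
  rw [Φ1, liftAlternating_ι]; simp [fam1]

theorem Φ0_ι (v : Fin 4 → K) : Φ0 K (ι K v) = 0 := by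
  rw [Φ0, liftAlternating_ι]; simp [fam0]

theorem Φ1_one (j : Fin 4) : Φ1 K j (1 : ExteriorAlgebra K (Fin 4 → K)) = 0 := by
  rw [Φ1, liftAlternating_one]; simp [fam1]

theorem Φ2_one (p q : Fin 4) : Φ2 K p q (1 : ExteriorAlgebra K (Fin 4 → K)) = 0 := by
  rw [Φ2, liftAlternating_one]; simp [fam2]

theorem Φ2_ι (p q : Fin 4) (v : Fin 4 → K) : Φ2 K p q (ι K v) = 0 := by
  rw [Φ2, liftAlternating_ι]; simp [fam2]

theorem Φ1_ι_ι (j : Fin 4) (v w : Fin 4 → K) : Φ1 K j (ι K v * ι K w) = 0 := by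
  rw [Φ1_ι_mul, Φ0_ι, mul_zero]

theorem Φ2_ι_ι (p q : Fin 4) (v w : Fin 4 → K) :
    Φ2 K p q (ι K v * ι K w) = v p * w q - v q * w p := by
  rw [Φ2_ι_mul, Φ1_ι, Φ1_ι]

theorem swap (u v : Fin 4 → K) : ι K u * ι K v = -(ι K v * ι K u) :=
  eq_neg_of_add_eq_zero_left (ι_add_mul_swap u v)

/-- The predicate cut out by the functionals vanishing on `I`. -/
def Q (z : ExteriorAlgebra K (Fin 4 → K)) : Prop :=
  Φ0 K z = 0 ∧ (∀ j, Φ1 K j z = 0) ∧ Φ2 K 0 3 z = 0 ∧ Φ2 K 1 3 z = 0 ∧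
    Φ2 K 0 1 z = Φ2 K 2 3 z

theorem Q_zero : Q K (0 : ExteriorAlgebra K (Fin 4 → K)) := by
  refine ⟨map_zero _, fun j => map_zero _, map_zero _, map_zero _, ?_⟩
  rw [map_zero, map_zero]

theorem Q_add {x y} (hx : Q K x) (hy : Q K y) : Q K (x + y) := by
  obtain ⟨h0, h1, h2, h3, h4⟩ := hx
  obtain ⟨g0, g1, g2, g3, g4⟩ := hy
  refine ⟨?_, fun j => ?_, ?_, ?_, ?_⟩ <;>
    simp [h0, h1, h2, h3, h4, g0, g1, g2, g3, g4]

theorem Q_smul (r : K) {x} (hx : Q K x) : Q K (r • x) := by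
  obtain ⟨h0, h1, h2, h3, h4⟩ := hx
  refine ⟨?_, fun j => ?_, ?_, ?_, ?_⟩ <;>
    simp [h0, h1, h2, h3, h4]

theorem Q_ι_mul (m : Fin 4 → K) {x} (hx : Q K x) : Q K (ι K m * x) := by
  obtain ⟨h0, h1, h2, h3, h4⟩ := hx
  refine ⟨Φ0_ι_mul K m x, fun j => ?_, ?_, ?_, ?_⟩
  · rw [Φ1_ι_mul, h0, mul_zero]
  · rw [Φ2_ι_mul, h1, h1, mul_zero, mul_zero, sub_zero]
  · rw [Φ2_ι_mul, h1, h1, mul_zero, mul_zero, sub_zero]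
  · rw [Φ2_ι_mul, Φ2_ι_mul, h1, h1, h1, h1]; ring

theorem Q_mul (r : ExteriorAlgebra K (Fin 4 → K)) {z} (hz : Q K z) : Q K (r * z) := by
  induction r using CliffordAlgebra.left_induction with
  | algebraMap s =>
      rw [← Algebra.smul_def]
      exact Q_smul K s hz
  | add x y hx hy => rw [add_mul]; exact Q_add K hx hy
  | ι_mul x m hx => rw [mul_assoc]; exact Q_ι_mul K m hx

/-- All elements of the ideal `I` satisfy `Q`. -/
theorem Q_of_mem_I {z : ExteriorAlgebra K (Fin 4 → K)}
    (hz : z ∈ Ideal.span {ι K (Pi.single 0 1) * ι K (Pi.single 1 1)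
        + ι K (Pi.single 2 1) * ι K (Pi.single 3 1),
      ι K (Pi.single 0 1) * ι K (Pi.single 2 1),
      ι K (Pi.single 1 1) * ι K (Pi.single 2 1)}) : Q K z := by
  induction hz using Submodule.span_induction with
  | zero => exact Q_zero K
  | add x y _ _ hx hy => exact Q_add K hx hy
  | smul r x _ hx =>
    rw [smul_eq_mul]
    exact Q_mul K r hx
  | mem x hx =>
    simp only [Set.mem_insert_iff, Set.mem_singleton_iff] at hx
    rcases hx with rfl | rfl | rfl
    · refine ⟨?_, fun j => ?_, ?_, ?_, ?_⟩ <;>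
        simp [Φ0_ι_mul, Φ1_ι_ι, Φ2_ι_ι, Pi.single_apply]
    · refine ⟨?_, fun j => ?_, ?_, ?_, ?_⟩ <;>
        simp [Φ0_ι_mul, Φ1_ι_ι, Φ2_ι_ι, Pi.single_apply]
    · refine ⟨?_, fun j => ?_, ?_, ?_, ?_⟩ <;>
        simp [Φ0_ι_mul, Φ1_ι_ι, Φ2_ι_ι, Pi.single_apply]

theorem eq_a (u v w z : Fin 4 → K) (y i : ExteriorAlgebra K (Fin 4 → K)) (l0 la lb lc : K) :
    ι K u * (l0•(1:ExteriorAlgebra K (Fin 4 → K)) + la•ι K u + lb•ι K v + lc•ι K w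
        + ι K z * y + i)
    = l0•(ι K u) + ι K z * (lb•(ι K w) - ι K u * y)
      + (lb•(ι K u*ι K v + ι K w*ι K z) + lc•(ι K u*ι K w) + ι K u * i) := by
  have h1 : ι K u * ι K u = 0 := ι_sq_zero u
  have h2 : ι K z * (ι K u * y) = -(ι K u * (ι K z * y)) := by
    rw [← mul_assoc, swap K z u, neg_mul, mul_assoc]
  have h3 : ι K w * ι K z = -(ι K z * ι K w) := swap K w z
  simp only [mul_add, mul_sub, mul_smul_comm, h1, h2, h3, smul_add, smul_neg, mul_one,
    smul_zero, ← mul_assoc]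
  abel

theorem eq_b (u v w z : Fin 4 → K) (y i : ExteriorAlgebra K (Fin 4 → K)) (l0 la lb lc : K) :
    ι K v * (l0•(1:ExteriorAlgebra K (Fin 4 → K)) + la•ι K u + lb•ι K v + lc•ι K w
        + ι K z * y + i)
    = l0•(ι K v) + ι K z * (-(la•(ι K w) + ι K v * y))
      + (-(la•(ι K u*ι K v + ι K w*ι K z)) + lc•(ι K v*ι K w) + ι K v * i) := by
  have h1 : ι K v * ι K v = 0 := ι_sq_zero v
  have h2 : ι K z * (ι K v * y) = -(ι K v * (ι K z * y)) := by
    rw [← mul_assoc, swap K z v, neg_mul, mul_assoc]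
  have h3 : ι K w * ι K z = -(ι K z * ι K w) := swap K w z
  have h4 : ι K v * ι K u = -(ι K u * ι K v) := swap K v u
  simp only [mul_add, mul_neg, mul_sub, mul_smul_comm, h1, h2, h3, h4, smul_add, smul_neg,
    mul_one, smul_zero, neg_smul, neg_add, neg_neg, ← mul_assoc]
  abel

theorem eq_c (u v w z : Fin 4 → K) (y i : ExteriorAlgebra K (Fin 4 → K)) (l0 la lb lc : K) :
    ι K w * (l0•(1:ExteriorAlgebra K (Fin 4 → K)) + la•ι K u + lb•ι K v + lc•ι K w
        + ι K z * y + i)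
    = l0•(ι K w) + ι K z * (-(ι K w * y))
      + ((-la)•(ι K u*ι K w) + (-lb)•(ι K v*ι K w) + ι K w * i) := by
  have h1 : ι K w * ι K w = 0 := ι_sq_zero w
  have h2 : ι K z * (ι K w * y) = -(ι K w * (ι K z * y)) := by
    rw [← mul_assoc, swap K z w, neg_mul, mul_assoc]
  have h4 : ι K w * ι K u = -(ι K u * ι K w) := swap K w u
  have h5 : ι K w * ι K v = -(ι K v * ι K w) := swap K w v
  simp only [mul_add, mul_sub, mul_smul_comm, h1, h2, h4, h5, smul_add, smul_neg, mul_one,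
    smul_zero, neg_smul, mul_neg, ← mul_assoc]
  abel

-- continuation (to be appended inside namespace, before `end Stmt8Aux`)

noncomputable def A : ExteriorAlgebra K (Fin 4 → K) := ι K (Pi.single 0 1)
noncomputable def B : ExteriorAlgebra K (Fin 4 → K) := ι K (Pi.single 1 1)
noncomputable def C : ExteriorAlgebra K (Fin 4 → K) := ι K (Pi.single 2 1)
noncomputable def D : ExteriorAlgebra K (Fin 4 → K) := ι K (Pi.single 3 1)

/-- The ideal `I`. -/
noncomputable def Isp : Ideal (ExteriorAlgebra K (Fin 4 → K)) :=
  Ideal.span {A K * B K + C K * D K, A K * C K, B K * C K}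

/-- Decomposability predicate. -/
def P (x : ExteriorAlgebra K (Fin 4 → K)) : Prop :=
  ∃ (l0 la lb lc : K) (y i : ExteriorAlgebra K (Fin 4 → K)),
    i ∈ Isp K ∧
    x = l0•(1:ExteriorAlgebra K (Fin 4 → K)) + la•A K + lb•B K + lc•C K + D K * y + i

theorem g1_mem : A K * B K + C K * D K ∈ Isp K := Ideal.subset_span (by simp)
theorem g2_mem : A K * C K ∈ Isp K := Ideal.subset_span (by simp)
theorem g3_mem : B K * C K ∈ Isp K := Ideal.subset_span (by simp)


theorem smulK_mem (r : K) {z} (hz : z ∈ Isp K) : r • z ∈ Isp K := by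
  rw [Algebra.smul_def]
  exact Ideal.mul_mem_left _ _ hz

theorem Dsq : D K * D K = 0 := ι_sq_zero _

theorem P_add {x y} (hx : P K x) (hy : P K y) : P K (x + y) := by
  obtain ⟨l0, la, lb, lc, y1, i1, hi1, rfl⟩ := hx
  obtain ⟨m0, ma, mb, mc, y2, i2, hi2, rfl⟩ := hy
  refine ⟨l0+m0, la+ma, lb+mb, lc+mc, y1+y2, i1+i2, add_mem hi1 hi2, ?_⟩
  simp only [add_smul, mul_add]
  abel

theorem P_smul (r : K) {x} (hx : P K x) : P K (r • x) := by
  obtain ⟨l0, la, lb, lc, y1, i1, hi1, rfl⟩ := hx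
  refine ⟨r*l0, r*la, r*lb, r*lc, r•y1, r•i1, smulK_mem K _ hi1, ?_⟩
  simp only [smul_add, mul_smul_comm, mul_smul]

theorem P_a {x} (hx : P K x) : P K (A K * x) := by
  obtain ⟨l0, la, lb, lc, y, i, hi, rfl⟩ := hx
  refine ⟨0, l0, 0, 0, lb•(C K) - A K * y,
    lb•(A K * B K + C K * D K) + lc•(A K * C K) + A K * i,
    add_mem (add_mem (smulK_mem K _ (g1_mem K)) (smulK_mem K _ (g2_mem K)))
      (Ideal.mul_mem_left _ _ hi), ?_⟩
  rw [show (A K * (l0•(1:ExteriorAlgebra K (Fin 4 → K)) + la•A K + lb•B K + lc•C K + D K * y + i)) = _ from eq_a K _ _ _ _ y i l0 la lb lc]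
  simp only [zero_smul]
  abel

theorem P_b {x} (hx : P K x) : P K (B K * x) := by
  obtain ⟨l0, la, lb, lc, y, i, hi, rfl⟩ := hx
  refine ⟨0, 0, l0, 0, -(la•(C K) + B K * y),
    -(la•(A K * B K + C K * D K)) + lc•(B K * C K) + B K * i,
    add_mem (add_mem (neg_mem (smulK_mem K _ (g1_mem K)))
      (smulK_mem K _ (g3_mem K))) (Ideal.mul_mem_left _ _ hi), ?_⟩
  rw [show (B K * (l0•(1:ExteriorAlgebra K (Fin 4 → K)) + la•A K + lb•B K + lc•C K + D K * y + i)) = _ from eq_b K _ _ _ _ y i l0 la lb lc]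
  simp only [zero_smul]
  abel

theorem P_c {x} (hx : P K x) : P K (C K * x) := by
  obtain ⟨l0, la, lb, lc, y, i, hi, rfl⟩ := hx
  refine ⟨0, 0, 0, l0, -(C K * y),
    (-la)•(A K * C K) + (-lb)•(B K * C K) + C K * i,
    add_mem (add_mem (smulK_mem K _ (g2_mem K)) (smulK_mem K _ (g3_mem K)))
      (Ideal.mul_mem_left _ _ hi), ?_⟩
  rw [show (C K * (l0•(1:ExteriorAlgebra K (Fin 4 → K)) + la•A K + lb•B K + lc•C K + D K * y + i)) = _ from eq_c K _ _ _ _ y i l0 la lb lc]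
  simp only [zero_smul]
  abel

theorem P_d {x} (hx : P K x) : P K (D K * x) := by
  obtain ⟨l0, la, lb, lc, y, i, hi, rfl⟩ := hx
  refine ⟨0, 0, 0, 0, l0•(1:ExteriorAlgebra K (Fin 4 → K)) + la•A K + lb•B K + lc•C K + D K * y,
    D K * i, Ideal.mul_mem_left _ _ hi, ?_⟩
  simp only [zero_smul, mul_add]
  abel

theorem ι_expand (m : Fin 4 → K) :
    ι K m = m 0 • A K + m 1 • B K + m 2 • C K + m 3 • D K := by
  have hm : m = m 0 • (Pi.single 0 1 : Fin 4 → K) + m 1 • (Pi.single 1 1 : Fin 4 → K)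
      + m 2 • (Pi.single 2 1 : Fin 4 → K) + m 3 • (Pi.single 3 1 : Fin 4 → K) := by
    funext j
    fin_cases j <;> simp [Pi.single_apply]
  conv_lhs => rw [hm]
  simp only [map_add, map_smul]
  rfl

theorem P_all (x : ExteriorAlgebra K (Fin 4 → K)) : P K x := by
  induction x using CliffordAlgebra.left_induction with
  | algebraMap r =>
    exact ⟨r, 0, 0, 0, 0, 0, zero_mem _, by
      simp [Algebra.algebraMap_eq_smul_one]⟩
  | add x y hx hy => exact P_add K hx hy
  | ι_mul x m hx =>
    rw [show CliffordAlgebra.ι 0 m = ι K m from rfl, ι_expand]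
    simp only [add_mul, smul_mul_assoc]
    exact P_add K (P_add K (P_add K (P_smul K _ (P_a K hx)) (P_smul K _ (P_b K hx)))
      (P_smul K _ (P_c K hx))) (P_smul K _ (P_d K hx))

theorem hard_dir (x : ExteriorAlgebra K (Fin 4 → K)) (h : D K * x ∈ Isp K) :
    ∃ y, x - D K * y ∈ Isp K := by
  obtain ⟨l0, la, lb, lc, y, i, hi, hx⟩ := P_all K x
  have hw : l0•(D K) + la•(D K * A K) + lb•(D K * B K) + lc•(D K * C K)
      = D K * x - D K * i := by
    rw [hx]
    simp only [mul_add, mul_smul_comm, mul_one]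
    rw [show D K * (D K * y) = 0 by rw [← mul_assoc, Dsq, zero_mul]]
    abel
  have hwI : l0•(D K) + la•(D K * A K) + lb•(D K * B K) + lc•(D K * C K) ∈ Isp K := by
    rw [hw]; exact sub_mem h (Ideal.mul_mem_left _ _ hi)
  obtain ⟨q0, q1, q2, q3, q4⟩ := Q_of_mem_I K hwI
  have e0 : l0 = 0 := by
    have := q1 3
    simpa [Φ1_ι, Φ1_ι_ι, A, B, C, D, Pi.single_apply] using this
  have ea : la = 0 := by
    simpa [Φ2_ι, Φ2_ι_ι, A, B, C, D, Pi.single_apply] using q2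
  have eb : lb = 0 := by
    simpa [Φ2_ι, Φ2_ι_ι, A, B, C, D, Pi.single_apply] using q3
  have ec : lc = 0 := by
    simpa [Φ2_ι, Φ2_ι_ι, A, B, C, D, Pi.single_apply] using q4
  refine ⟨y, ?_⟩
  rw [hx, e0, ea, eb, ec]
  simpa using hi

theorem easy_dir (x y : ExteriorAlgebra K (Fin 4 → K)) (h : x - D K * y ∈ Isp K) :
    D K * x ∈ Isp K := by
  have hD : D K * x = D K * (x - D K * y) := by
    rw [mul_sub, ← mul_assoc, Dsq, zero_mul, sub_zero]
  rw [hD]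
  exact Ideal.mul_mem_left _ _ h

theorem span_eq_thm : Isp K ⊔ Ideal.span {D K}
    = Ideal.span {A K * B K, A K * C K, B K * C K, D K} := by
  have hD4 : D K ∈ Ideal.span {A K * B K, A K * C K, B K * C K, D K} :=
    Ideal.subset_span (by simp)
  apply le_antisymm
  · apply sup_le
    · rw [Isp, Ideal.span_le]
      rintro x hx
      simp only [Set.mem_insert_iff, Set.mem_singleton_iff] at hx
      rcases hx with rfl | rfl | rfl
      · exact add_mem (Ideal.subset_span (by simp)) (Ideal.mul_mem_left _ _ hD4)
      · exact Ideal.subset_span (by simp)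
      · exact Ideal.subset_span (by simp)
    · rw [Ideal.span_le]
      rintro x hx
      simp only [Set.mem_singleton_iff] at hx
      subst hx
      exact hD4
  · rw [Ideal.span_le]
    rintro x hx
    simp only [Set.mem_insert_iff, Set.mem_singleton_iff] at hx
    have hg1 : A K * B K + C K * D K ∈ Isp K ⊔ Ideal.span {D K} :=
      Ideal.mem_sup_left (g1_mem K)
    have hcd : C K * D K ∈ Isp K ⊔ Ideal.span {D K} :=
      Ideal.mem_sup_right (Ideal.mul_mem_left _ _ (Ideal.subset_span rfl))
    rcases hx with rfl | rfl | rfl | rfl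
    · have := sub_mem hg1 hcd
      simpa using this
    · exact Ideal.mem_sup_left (g2_mem K)
    · exact Ideal.mem_sup_left (g3_mem K)
    · exact Ideal.mem_sup_right (Ideal.subset_span rfl)

end Stmt8Aux

/-- In the exterior algebra `E = K⟨a,b,c,d⟩` on four generators, with
`I = (a∧b + c∧d, a∧c, b∧c)`: the element `d` is regular on `E/I` (the annihilator of
`d` in `E/I` equals `d·(E/I)`), and the image of `I` in `E/(d) ≅ K⟨a,b,c⟩` is the
square `m² = (ab, ac, bc)` of the maximal ideal `m = (a,b,c)` (expressed inside `E` as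
`I + (d) = (ab, ac, bc, d)`). -/
theorem stmt8 (K : Type*) [Field K] :
    let E := ExteriorAlgebra K (Fin 4 → K)
    let a : E := ExteriorAlgebra.ι K (Pi.single 0 1)
    let b : E := ExteriorAlgebra.ι K (Pi.single 1 1)
    let c : E := ExteriorAlgebra.ι K (Pi.single 2 1)
    let d : E := ExteriorAlgebra.ι K (Pi.single 3 1)
    let I : Ideal E := Ideal.span {a * b + c * d, a * c, b * c}
    (∀ x : E, d * x ∈ I ↔ ∃ y : E, x - d * y ∈ I) ∧
    I ⊔ Ideal.span {d} = Ideal.span {a * b, a * c, b * c, d} := by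
  intro E a b c d I
  constructor
  · intro x
    constructor
    · intro h
      exact Stmt8Aux.hard_dir K x h
    · rintro ⟨y, hy⟩
      exact Stmt8Aux.easy_dir K x y hy
  · exact Stmt8Aux.span_eq_thm K
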